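/- Let A be an affine K-module, with endomorphism set Aff(A) of all affine K-module homomorphisms A → A. With the pointwise heap operation ⟨f,g,h⟩(a) = ⟨f(a),g(a),h(a)⟩, the pointwise action (α ▷_f g)(a) = α ▷_{f(a)} g(a), and composition as multiplication, Aff(A) is an associative K-affgebra, i.e., an affine K-module with a bi-affine associative multiplication. In particular, for all f,g ∈ Aff(A), α ∈ K, the map α ▷_f g is again an affine endomorphism of A. -/

import Mathlib

universe u v

class AbHeap (H : Type v) where
  hp : H → H → H → H
  hassoc : ∀ a b c d e : H, hp (hp a b c) d e = hp a b (hp c d e)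
  hidr : ∀ a b : H, hp a b b = a
  hidl : ∀ a b : H, hp b b a = a
  hcomm : ∀ a b c : H, hp a b c = hp c b a

open AbHeap

class AffMod (K : Type u) [CommRing K] (A : Type v) extends AbHeap A where
  act : K → A → A → A
  act_hp : ∀ (α : K) (a b c d : A),
    act α a (hp b c d) = hp (act α a b) (act α a c) (act α a d)
  act_scalar_hp : ∀ (α β γ : K) (a b : A),
    act (α - β + γ) a b = hp (act α a b) (act β a b) (act γ a b)
  act_mul : ∀ (α β : K) (a b : A), act (α * β) a b = act α a (act β a b)
  act_base : ∀ (α : K) (a b c : A), act α a b = hp (act α c b) (act α c a) a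
  act_zero : ∀ a b : A, act (0 : K) a b = a
  act_one : ∀ a b : A, act (1 : K) a b = b

open AffMod

/-- A homomorphism of affine `K`-modules: a heap homomorphism preserving the action. -/
def IsAffHom (K : Type u) [CommRing K] {A : Type v} {B : Type v} [AffMod K A] [AffMod K B]
    (f : A → B) : Prop :=
  (∀ a b c : A, f (hp a b c) = hp (f a) (f b) (f c)) ∧
  (∀ (α : K) (a b : A), f (act α a b) = act α (f a) (f b))

/-- A (left) Lie bracket on an affine `K`-module: bi-affine, heap-antisymmetric,
satisfying the heap Jacobi identity. -/
def IsLieBracket (K : Type u) [CommRing K] {A : Type v} [AffMod K A] (br : A → A → A) : Prop :=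
  (∀ b : A, IsAffHom K (fun a => br a b)) ∧
  (∀ a : A, IsAffHom K (br a)) ∧
  (∀ a b : A, hp (br a b) (br a a) (br b a) = br b b) ∧
  (∀ a b c : A,
    hp (hp (br a (br b c)) (br a a) (br b (br c a))) (br b b) (br c (br a b)) = br c c)


section Stmt5Aux

-- Auxiliary: an abelian heap based at a point `p` is an abelian group,
-- allowing `abel` to verify heap identities.

def Based (A : Type v) (_e : A) : Type v := A

def toB {A : Type v} (p : A) (x : A) : Based A p := x

def badd {A : Type v} [AbHeap A] (p x y : A) : A := hp x p y
def bneg {A : Type v} [AbHeap A] (p x : A) : A := hp p x p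

instance (A : Type v) [AbHeap A] (p : A) : Zero (Based A p) := ⟨toB p p⟩
instance (A : Type v) [AbHeap A] (p : A) : Add (Based A p) := ⟨fun x y => badd (A := A) p x y⟩
instance (A : Type v) [AbHeap A] (p : A) : Neg (Based A p) := ⟨fun x => bneg (A := A) p x⟩

instance (A : Type v) [AbHeap A] (p : A) : AddCommGroup (Based A p) where
  add x y := x + y
  zero := 0
  neg x := -x
  add_assoc a b c := hassoc (H := A) a p b p c
  zero_add a := hidl (H := A) a p
  add_zero a := hidr (H := A) a p
  add_comm a b := hcomm (H := A) a p b
  neg_add_cancel a := by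
    show hp (hp p a p) p a = p
    exact (hassoc (H := A) p a p p a).trans ((congrArg (hp p a) (hidl (H := A) a p)).trans (hidr (H := A) p a))
  nsmul := nsmulRec
  zsmul := zsmulRec

section HeapLemmas
variable {A : Type v} [AbHeap A]

lemma hp_toB (p x y z : A) : toB p (hp x y z) = toB p x - toB p y + toB p z := by
  show hp x y z = hp (hp x p (hp p y p)) p z
  rw [← hassoc x p p y p, hidr, hassoc, hidl]

lemma medial (a b c d e f g h i : A) :
    hp (hp a b c) (hp d e f) (hp g h i) = hp (hp a d g) (hp b e h) (hp c f i) := by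
  have key : toB b (hp (hp a b c) (hp d e f) (hp g h i))
      = toB b (hp (hp a d g) (hp b e h) (hp c f i)) := by
    simp only [hp_toB]; abel
  exact key

lemma exch (u v w s t : A) : hp (hp u v w) s t = hp (hp u s t) v w := by
  have key : toB u (hp (hp u v w) s t) = toB u (hp (hp u s t) v w) := by
    have h1 : toB u (hp (hp u v w) s t) = toB u (hp u v w) - toB u s + toB u t := hp_toB ..
    have h2 : toB u (hp (hp u s t) v w) = toB u (hp u s t) - toB u v + toB u w := hp_toB ..
    rw [h1, h2, hp_toB, hp_toB]; abel
  exact key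

end HeapLemmas

section ActLemmas
variable {K : Type u} [CommRing K] {A : Type v} [AffMod K A]

lemma act_self (α : K) (a : A) : act α a a = a := by
  rw [act_base α a a a]; exact hidl _ _

lemma key1 (α : K) (a b c x y z : A) :
    act α (hp a b c) (hp x y z) = hp (act α a x) (act α b y) (act α c z) := by
  calc act α (hp a b c) (hp x y z)
      = hp (act α a (hp x y z)) (act α a (hp a b c)) (hp a b c) := act_base α _ _ a
    _ = hp (hp (act α a x) (act α a y) (act α a z))
          (hp (act α a a) (act α a b) (act α a c)) (hp a b c) := by rw [act_hp, act_hp]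
    _ = hp (hp (act α a x) (act α a a) a) (hp (act α a y) (act α a b) b)
          (hp (act α a z) (act α a c) c) := medial ..
    _ = hp (act α a x) (hp (act α a y) (act α a b) b)
          (hp (act α a z) (act α a c) c) := by rw [act_self, hidr]
    _ = hp (act α a x) (act α b y) (act α c z) := by
          rw [← act_base α b y a, ← act_base α c z a]

lemma key2 (α β : K) (a b x y : A) :
    act α (act β a b) (act β x y) = act β (act α a x) (act α b y) := by
  calc act α (act β a b) (act β x y)
      = hp (act α a (act β x y)) (act α a (act β a b)) (act β a b) := act_base α _ _ a
    _ = hp (act α a (hp (act β a y) (act β a x) x)) (act (α * β) a b) (act β a b) := by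
          rw [← act_mul, act_base β x y a]
    _ = hp (hp (act (α * β) a y) (act (α * β) a x) (act α a x))
          (act (α * β) a b) (act β a b) := by
          rw [act_hp, ← act_mul α β a y, ← act_mul α β a x]
    _ = hp (hp (act (α * β) a y) (act (α * β) a b) (act β a b))
          (act (α * β) a x) (act α a x) := exch ..
    _ = hp (hp (act (β * α) a y) (act (β * α) a b) (act β a b))
          (act (β * α) a x) (act α a x) := by rw [mul_comm]
    _ = hp (act β a (act α b y)) (act β a (act α a x)) (act α a x) := by
          rw [act_mul β α a y, act_mul β α a b, act_mul β α a x, ← act_hp,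
            ← act_base α b y a]
    _ = act β (act α a x) (act α b y) := (act_base β _ _ a).symm

end ActLemmas

end Stmt5Aux

/-- `Aff(A)` with pointwise heap operation and action and with composition is an
associative `K`-affgebra; in particular `α ▷_f g` is again affine. -/
theorem stmt5 {K : Type u} [CommRing K] {A : Type v} [AffMod K A] :
    (∀ (α : K) (f g : A → A), IsAffHom K f → IsAffHom K g →
      IsAffHom K (fun a => act α (f a) (g a))) ∧
    (∀ f g h : A → A, IsAffHom K f → IsAffHom K g → IsAffHom K h →
      IsAffHom K (fun a => hp (f a) (g a) (h a))) ∧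
    (∀ f g : A → A, IsAffHom K f → IsAffHom K g → IsAffHom K (f ∘ g)) ∧
    (∀ f g h : A → A, (f ∘ g) ∘ h = f ∘ (g ∘ h)) ∧
    (∀ k f g h : A → A, IsAffHom K k →
      (fun a => k (hp (f a) (g a) (h a))) = fun a => hp (k (f a)) (k (g a)) (k (h a))) ∧
    (∀ (α : K) (k f g : A → A), IsAffHom K k →
      (fun a => k (act α (f a) (g a))) = fun a => act α (k (f a)) (k (g a))) ∧
    (∀ k f g h : A → A,
      (fun a => hp (f (k a)) (g (k a)) (h (k a))) = fun a => hp (f (k a)) (g (k a)) (h (k a))) := by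
  refine ⟨?_, ?_, ?_, fun f g h => rfl, ?_, ?_, fun k f g h => rfl⟩
  · intro α f g hf hg
    refine ⟨fun a b c => ?_, fun β p q => ?_⟩
    · show act α (f (hp a b c)) (g (hp a b c))
        = hp (act α (f a) (g a)) (act α (f b) (g b)) (act α (f c) (g c))
      rw [hf.1, hg.1, key1]
    · show act α (f (act β p q)) (g (act β p q))
        = act β (act α (f p) (g p)) (act α (f q) (g q))
      rw [hf.2, hg.2, key2]
  · intro f g h hf hg hh
    refine ⟨fun a b c => ?_, fun β p q => ?_⟩
    · show hp (f (hp a b c)) (g (hp a b c)) (h (hp a b c))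
        = hp (hp (f a) (g a) (h a)) (hp (f b) (g b) (h b)) (hp (f c) (g c) (h c))
      rw [hf.1, hg.1, hh.1, medial]
    · show hp (f (act β p q)) (g (act β p q)) (h (act β p q))
        = act β (hp (f p) (g p) (h p)) (hp (f q) (g q) (h q))
      rw [hf.2, hg.2, hh.2]
      exact (key1 β (f p) (g p) (h p) (f q) (g q) (h q)).symm
  · intro f g hf hg
    refine ⟨fun a b c => ?_, fun β p q => ?_⟩
    · show f (g (hp a b c)) = hp (f (g a)) (f (g b)) (f (g c))
      rw [hg.1, hf.1]
    · show f (g (act β p q)) = act β (f (g p)) (f (g q))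
      rw [hg.2, hf.2]
  · intro k f g h hk
    funext a
    exact hk.1 _ _ _
  · intro α k f g hk
    funext a
    exact hk.2 _ _ _
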